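/- For every real x ≥ 0, the number of integers n with 1 ≤ n ≤ ⌊x⌋ and μ(n) = 0 equals −Σ_{i=2}^{⌊√x⌋} μ(i)·⌊x/i²⌋. -/

import Mathlib

open ArithmeticFunction Finset

noncomputable def Mertens (x : ℝ) : ℤ := ∑ k ∈ Finset.Icc 1 ⌊x⌋₊, moebius k

noncomputable def Nplus (x : ℝ) : ℕ := ((Finset.Icc 1 ⌊x⌋₊).filter (fun n => moebius n = 1)).card

noncomputable def Nminus (x : ℝ) : ℕ := ((Finset.Icc 1 ⌊x⌋₊).filter (fun n => moebius n = -1)).card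

noncomputable def Nzero (x : ℝ) : ℕ := ((Finset.Icc 1 ⌊x⌋₊).filter (fun n => moebius n = 0)).card

noncomputable def Qsf (x : ℝ) : ℕ := ((Finset.Icc 1 ⌊x⌋₊).filter (fun n => moebius n ≠ 0)).card

lemma divsum_moebius (b : ℕ) :
    ∑ d ∈ b.divisors, (moebius d : ℤ) = if b = 1 then 1 else 0 := by
  rw [← coe_mul_zeta_apply, moebius_mul_coe_zeta, one_apply]

lemma sq_dvd_iff {a b d : ℕ} (ha : Squarefree a) (hb : 0 < b) :
    d ^ 2 ∣ b ^ 2 * a ↔ d ∣ b := by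
  have ha0 : a ≠ 0 := ha.ne_zero
  constructor
  · intro h
    have hn0 : b ^ 2 * a ≠ 0 := by positivity
    have hd0 : d ≠ 0 := by
      rintro rfl
      have h0 : (0:ℕ) ^ 2 = 0 := by norm_num
      rw [h0, zero_dvd_iff] at h
      exact hn0 h
    rw [← Nat.factorization_le_iff_dvd hd0 hb.ne']
    have hle := (Nat.factorization_le_iff_dvd (pow_ne_zero 2 hd0) hn0).mpr h
    intro p
    have h1 := hle p
    rw [Nat.factorization_mul (pow_ne_zero 2 hb.ne') ha0] at h1
    rw [Nat.factorization_pow, Nat.factorization_pow] at h1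
    have h2 : a.factorization p ≤ 1 := ha.natFactorization_le_one p
    simp only [Finsupp.coe_add, Finsupp.coe_smul, Pi.add_apply, Pi.smul_apply, smul_eq_mul] at h1
    omega
  · intro h
    exact dvd_mul_of_dvd_left (pow_dvd_pow_of_dvd h 2) a

lemma key_sum {n K : ℕ} (hn : 1 ≤ n) (hK : n ≤ K) :
    ∑ d ∈ Finset.Icc 1 K, (if d ^ 2 ∣ n then (moebius d : ℤ) else 0)
      = if Squarefree n then 1 else 0 := by
  obtain ⟨a, b, hab, ha⟩ := Nat.sq_mul_squarefree n
  have ha0 : 0 < a := Nat.pos_of_ne_zero ha.ne_zero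
  have hb0 : 0 < b := by
    rcases Nat.eq_zero_or_pos b with h | h
    · exfalso; rw [h] at hab; simp at hab; omega
    · exact h
  have hbn : b ≤ n := by
    calc b ≤ b ^ 2 * a := by nlinarith
    _ = n := hab
  have hfilter : (Finset.Icc 1 K).filter (fun d => d ^ 2 ∣ n) = b.divisors := by
    ext d
    simp only [mem_filter, mem_Icc, Nat.mem_divisors]
    constructor
    · rintro ⟨⟨h1, h2⟩, hd⟩
      rw [← hab] at hd
      exact ⟨(sq_dvd_iff ha hb0).mp hd, hb0.ne'⟩
    · rintro ⟨hd, -⟩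
      have hd0 : 0 < d := Nat.pos_of_dvd_of_pos hd hb0
      have hdb : d ≤ b := Nat.le_of_dvd hb0 hd
      refine ⟨⟨hd0, le_trans (hdb.trans hbn) hK⟩, ?_⟩
      rw [← hab]
      exact (sq_dvd_iff ha hb0).mpr hd
  rw [← Finset.sum_filter, hfilter, divsum_moebius]
  have hiff : b = 1 ↔ Squarefree n := by
    constructor
    · rintro rfl
      rw [← hab]; simpa using ha
    · intro h
      refine Nat.isUnit_iff.mp (h b ⟨a, ?_⟩)
      rw [← hab]; ring
  simp [hiff]

theorem stmt1 (x : ℝ) (hx : 0 ≤ x) :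
    (Nzero x : ℤ) = -∑ i ∈ Finset.Icc 2 ⌊Real.sqrt x⌋₊, moebius i * ⌊x / (i ^ 2 : ℝ)⌋ := by
  set N := ⌊x⌋₊ with hN
  set M := ⌊Real.sqrt x⌋₊ with hM
  by_cases hN0 : N = 0
  · have hx1 : x < 1 := by
      by_contra h
      push_neg at h
      have h2 : 1 ≤ N := Nat.le_floor (by exact_mod_cast h)
      omega
    have hsx : Real.sqrt x < 1 := by
      rw [show (1:ℝ) = Real.sqrt 1 by simp]
      exact Real.sqrt_lt_sqrt hx hx1
    have hM0 : M = 0 := Nat.floor_eq_zero.mpr hsx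
    simp only [Nzero, ← hN, hN0, hM0]
    simp
  -- main case
  have hN1 : 1 ≤ N := Nat.pos_of_ne_zero hN0
  -- Step 1 : Nzero + Qsf = N
  have hsplit : (Nzero x : ℤ) = N - Qsf x := by
    have h1 : Nzero x + Qsf x = N := by
      unfold Nzero Qsf
      rw [← hN]
      have := Finset.card_filter_add_card_filter_not
        (s := Finset.Icc 1 N) (p := fun n => moebius n = 0)
      rw [Nat.card_Icc] at this
      simp only [ne_eq]
      omega
    omega
  -- counting lemma
  have hcount : ∀ d : ℕ, ((Finset.Icc 1 N).filter (fun n => d ^ 2 ∣ n)).card = N / d ^ 2 := by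
    intro d
    rw [show Finset.Icc 1 N = Finset.Ioc 0 N from rfl]
    exact Nat.Ioc_filter_dvd_card_eq_div N (d ^ 2)
  -- Step 2 : Qsf = ∑_{d=1}^{N} μ d * (N / d²)
  have hQ : (Qsf x : ℤ) = ∑ d ∈ Finset.Icc 1 N, (moebius d : ℤ) * ((N / d ^ 2 : ℕ) : ℤ) := by
    unfold Qsf
    rw [← hN, Finset.card_filter]
    push_cast
    rw [show ∀ s : Finset ℕ, ∑ n ∈ s, (if moebius n ≠ 0 then (1:ℤ) else 0)
        = ∑ n ∈ s, (if Squarefree n then (1:ℤ) else 0) from fun s =>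
        Finset.sum_congr rfl fun n _ => by simp [moebius_ne_zero_iff_squarefree]]
    rw [show ∑ n ∈ Finset.Icc 1 N, (if Squarefree n then (1:ℤ) else 0)
        = ∑ n ∈ Finset.Icc 1 N, ∑ d ∈ Finset.Icc 1 N, (if d ^ 2 ∣ n then (moebius d : ℤ) else 0)
        from Finset.sum_congr rfl fun n hn => by
          rw [mem_Icc] at hn
          exact (key_sum hn.1 hn.2).symm]
    rw [Finset.sum_comm]
    refine Finset.sum_congr rfl fun d _ => ?_
    rw [← Finset.sum_filter, Finset.sum_const, hcount d, nsmul_eq_mul, mul_comm, Int.natCast_div]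
    push_cast
    ring
  -- Step 3 : pull out d = 1, and change range to Icc 2 M
  have hone : Finset.Icc 1 N = insert 1 (Finset.Icc 2 N) := by
    ext m; simp only [mem_Icc, mem_insert]; omega
  have hzero_of_gtN : ∀ d : ℕ, N < d → ((N / d ^ 2 : ℕ)) = 0 := by
    intro d hd
    exact Nat.div_eq_of_lt (by nlinarith)
  have hzero_of_gtM : ∀ d : ℕ, M < d → ((N / d ^ 2 : ℕ)) = 0 := by
    intro d hd
    apply Nat.div_eq_of_lt
    have h1 : Real.sqrt x < d := by
      rw [hM] at hd
      exact (Nat.floor_lt (Real.sqrt_nonneg x)).mp hd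
    have hd0 : (0:ℝ) < d := lt_of_le_of_lt (Real.sqrt_nonneg x) h1
    have h2 : x < (d:ℝ) ^ 2 := by
      have := Real.sq_sqrt hx
      nlinarith [Real.sqrt_nonneg x]
    have h3 : (N : ℝ) ≤ x := Nat.floor_le hx
    have : (N : ℝ) < ((d ^ 2 : ℕ) : ℝ) := by push_cast; linarith
    exact_mod_cast this
  have hrange : ∑ d ∈ Finset.Icc 2 N, (moebius d : ℤ) * ((N / d ^ 2 : ℕ) : ℤ)
      = ∑ d ∈ Finset.Icc 2 M, (moebius d : ℤ) * ((N / d ^ 2 : ℕ) : ℤ) := by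
    have hsub1 : Finset.Icc 2 N ⊆ Finset.Icc 2 (max N M) :=
      Finset.Icc_subset_Icc le_rfl (le_max_left N M)
    have hsub2 : Finset.Icc 2 M ⊆ Finset.Icc 2 (max N M) :=
      Finset.Icc_subset_Icc le_rfl (le_max_right N M)
    rw [Finset.sum_subset hsub1, Finset.sum_subset hsub2]
    · intro d hd hnd
      rw [mem_Icc] at hd hnd
      have : M < d := by omega
      rw [hzero_of_gtM d this]; simp
    · intro d hd hnd
      rw [mem_Icc] at hd hnd
      have : N < d := by omega
      rw [hzero_of_gtN d this]; simp
  have hQ2 : (Qsf x : ℤ) = N + ∑ d ∈ Finset.Icc 2 M, (moebius d : ℤ) * ((N / d ^ 2 : ℕ) : ℤ) := by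
    rw [hQ, hone, Finset.sum_insert (by simp), hrange]
    simp
  -- Step 4 : (N / d² : ℤ) = ⌊x / d²⌋
  have hfloor : ∀ d ∈ Finset.Icc 2 M, (moebius d : ℤ) * ((N / d ^ 2 : ℕ) : ℤ)
      = (moebius d : ℤ) * ⌊x / (d ^ 2 : ℝ)⌋ := by
    intro d hd
    congr 1
    rw [hN, ← Nat.floor_div_natCast x (d ^ 2)]
    rw [Int.natCast_floor_eq_floor (div_nonneg hx (by positivity))]
    norm_num
  rw [hsplit, hQ2, Finset.sum_congr rfl hfloor]
  ring
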